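/- Let H be a normed space over ℂ, n ≥ 1, x₁,…,xₙ ∈ H, α₁,…,αₙ ∈ ℂ, p a probability vector, a ∈ H, r ≥ 0. If ‖xᵢ − a‖ ≤ r for all i, then ‖∑ᵢ pᵢ αᵢ xᵢ − (∑ᵢ pᵢ αᵢ)(∑ᵢ pᵢ xᵢ)‖ ≤ r · (∑ᵢ pᵢ|αᵢ|² − |∑ᵢ pᵢ αᵢ|²)^{1/2}. -/

import Mathlib

theorem gruss_scalar_bound_sqrt {H : Type*} [NormedAddCommGroup H] [NormedSpace ℂ H]
    (n : ℕ) (hn : 1 ≤ n) (x : Fin n → H) (α : Fin n → ℂ) (p : Fin n → ℝ)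
    (hp : ∀ i, 0 ≤ p i) (hsum : ∑ i, p i = 1) (a : H) (r : ℝ) (hr : 0 ≤ r)
    (hx : ∀ i, ‖x i - a‖ ≤ r) :
    ‖∑ i, (p i : ℂ) • α i • x i - (∑ i, (p i : ℂ) * α i) • ∑ i, (p i : ℂ) • x i‖
      ≤ r * Real.sqrt (∑ i, p i * ‖α i‖ ^ 2
          - ‖∑ i, (p i : ℂ) * α i‖ ^ 2) := by
  set c : ℂ := ∑ i, (p i : ℂ) * α i with hc
  have hpc : (∑ i, (p i : ℂ)) = 1 := by
    rw [← Complex.ofReal_sum, hsum, Complex.ofReal_one]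
  -- key algebraic identity
  have key : ∑ i, (p i : ℂ) • α i • x i - c • ∑ i, (p i : ℂ) • x i
      = ∑ i, (p i : ℂ) • ((α i - c) • (x i - a)) := by
    have e1 : ∀ i : Fin n, (p i : ℂ) • ((α i - c) • (x i - a)) =
        (p i : ℂ) • α i • x i - ((p i : ℂ) * c) • x i
          - ((p i : ℂ) * α i) • a + ((p i : ℂ) * c) • a := by
      intro i; module
    rw [Finset.sum_congr rfl fun i _ => e1 i]
    simp only [Finset.sum_add_distrib, Finset.sum_sub_distrib]
    have e2 : ∑ i, ((p i : ℂ) * c) • x i = c • ∑ i, (p i : ℂ) • x i := by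
      rw [Finset.smul_sum]
      exact Finset.sum_congr rfl fun i _ => by rw [smul_smul, mul_comm]
    have e3 : ∑ i, ((p i : ℂ) * α i) • a = c • a := by
      rw [hc, ← Finset.sum_smul]
    have e4 : ∑ i, ((p i : ℂ) * c) • a = c • a := by
      rw [← Finset.sum_smul, ← Finset.sum_mul, hpc, one_mul]
    rw [e2, e3, e4]; abel
  rw [key]
  -- norm bound
  have hb : ‖∑ i, (p i : ℂ) • ((α i - c) • (x i - a))‖
      ≤ r * ∑ i, p i * ‖α i - c‖ := by
    refine (norm_sum_le _ _).trans ?_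
    rw [Finset.mul_sum]
    refine Finset.sum_le_sum fun i _ => ?_
    rw [norm_smul, norm_smul, Complex.norm_real, Real.norm_eq_abs,
      abs_of_nonneg (hp i)]
    calc p i * (‖α i - c‖ * ‖x i - a‖) ≤ p i * (‖α i - c‖ * r) :=
          mul_le_mul_of_nonneg_left
            (mul_le_mul_of_nonneg_left (hx i) (norm_nonneg _)) (hp i)
      _ = r * (p i * ‖α i - c‖) := by
          ring
  refine hb.trans ?_
  gcongr
  -- Cauchy-Schwarz step
  have hvar : ∑ i, p i * ‖α i - c‖ ^ 2
      = ∑ i, p i * ‖α i‖ ^ 2 - ‖c‖ ^ 2 := by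
    have hc' : ∑ i, (p i : ℂ) * (starRingEnd ℂ) (α i) = (starRingEnd ℂ) c := by
      rw [hc, map_sum]
      exact Finset.sum_congr rfl fun i _ => by
        rw [map_mul, Complex.conj_ofReal]
    have e : (∑ i, (p i : ℂ) * ((α i - c) * (starRingEnd ℂ) (α i - c)))
        = (∑ i, (p i : ℂ) * (α i * (starRingEnd ℂ) (α i))) - c * (starRingEnd ℂ) c := by
      have expand : ∀ i : Fin n, (p i : ℂ) * ((α i - c) * (starRingEnd ℂ) (α i - c))
          = (p i : ℂ) * (α i * (starRingEnd ℂ) (α i))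
            - (starRingEnd ℂ) c * ((p i : ℂ) * α i)
            - c * ((p i : ℂ) * (starRingEnd ℂ) (α i))
            + (p i : ℂ) * (c * (starRingEnd ℂ) c) := by
        intro i; rw [map_sub]; ring
      rw [Finset.sum_congr rfl fun i _ => expand i]
      simp only [Finset.sum_add_distrib, Finset.sum_sub_distrib, ← Finset.mul_sum,
        ← Finset.sum_mul]
      rw [← hc, hc', hpc]
      ring
    have habs : ∀ (q : ℝ) (z : ℂ), ((q : ℂ) * (z * (starRingEnd ℂ) z)).re
        = q * ‖z‖ ^ 2 := by
      intro q z
      rw [Complex.mul_conj, ← Complex.ofReal_mul, Complex.ofReal_re, Complex.sq_norm]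
    have h1 := congrArg Complex.re e
    rw [Complex.re_sum, Complex.sub_re, Complex.re_sum] at h1
    simp only [habs] at h1
    rw [h1, Complex.mul_conj, Complex.ofReal_re, Complex.sq_norm]
  -- now ∑ p |α - c| ≤ sqrt (∑ p |α - c|^2)
  rw [← hvar]
  have hnn : 0 ≤ ∑ i, p i * ‖α i - c‖ :=
    Finset.sum_nonneg fun i _ => mul_nonneg (hp i) (norm_nonneg _)
  have hnn2 : 0 ≤ ∑ i, p i * ‖α i - c‖ ^ 2 :=
    Finset.sum_nonneg fun i _ => mul_nonneg (hp i) (sq_nonneg _)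
  rw [show (∑ i, p i * ‖α i - c‖) = |∑ i, p i * ‖α i - c‖|
    from (abs_of_nonneg hnn).symm, ← Real.sqrt_sq_eq_abs]
  apply Real.sqrt_le_sqrt
  calc (∑ i, p i * ‖α i - c‖) ^ 2
      = (∑ i, Real.sqrt (p i) * (Real.sqrt (p i) * ‖α i - c‖)) ^ 2 := by
        congr 1
        exact Finset.sum_congr rfl fun i _ => by
          rw [← mul_assoc, Real.mul_self_sqrt (hp i)]
    _ ≤ (∑ i, Real.sqrt (p i) ^ 2) * ∑ i, (Real.sqrt (p i) * ‖α i - c‖) ^ 2 :=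
        Finset.sum_mul_sq_le_sq_mul_sq Finset.univ _ _
    _ = ∑ i, p i * ‖α i - c‖ ^ 2 := by
        have : ∑ i, Real.sqrt (p i) ^ 2 = 1 := by
          rw [Finset.sum_congr rfl fun i _ => Real.sq_sqrt (hp i), hsum]
        rw [this, one_mul]
        exact Finset.sum_congr rfl fun i _ => by
          rw [mul_pow, Real.sq_sqrt (hp i)]
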